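/- Let A be a unital C*-algebra and let v, t₁, t_j ∈ A (j ≥ 2) satisfy v*v = 1, vv* = p for a projection p, v* t₁ = 1, t₁* t₁ = 1, t_j* t_j = p, t₁ t₁* = e for a projection e ≤ p, and p + ∑_{j=2}^m t_j t_j* ≤ 1 with mutually orthogonal range projections. Define s̃₁ := v* t₁ v, s̃_j := v* t₁ t_j v for j ≥ 2, and f̃ := v* e v. Then s̃_j* s̃_j = 1 for all j, and s̃₁ s̃₁* + ∑_{j=2}^m s̃_j s̃_j* ≤ f̃ for every m ≥ 2. -/

import Mathlib

/-- With `s̃₁ := v* t₁ v`, `s̃_j := v* t₁ t_j v` (`j ≥ 2`) and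
`f̃ := v* e v`, all `s̃_j` are isometries and
`s̃₁ s̃₁* + ∑_{j=2}^m s̃_j s̃_j* ≤ f̃` for every `m ≥ 2`. -/
theorem stmt13 {A : Type*} [NormedRing A] [StarRing A] [CStarRing A] [CompleteSpace A]
    [NormedAlgebra ℂ A] [StarModule ℂ A] [PartialOrder A] [StarOrderedRing A]
    (v t₁ p e : A) (t : ℕ → A)
    (hp₁ : IsSelfAdjoint p) (hp₂ : IsIdempotentElem p)
    (he₁ : IsSelfAdjoint e) (he₂ : IsIdempotentElem e)
    (h1 : star v * v = 1) (h2 : v * star v = p)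
    (h3 : star v * t₁ = 1) (h4 : star t₁ * t₁ = 1)
    (h5 : ∀ j, 2 ≤ j → star (t j) * t j = p)
    (h6 : t₁ * star t₁ = e) (h7 : e ≤ p)
    (h8 : ∀ m, 2 ≤ m → p + ∑ j ∈ Finset.Icc 2 m, t j * star (t j) ≤ 1)
    (h9 : ∀ i j, 2 ≤ i → 2 ≤ j → i ≠ j →
      (t i * star (t i)) * (t j * star (t j)) = 0)
    (h10 : ∀ j, 2 ≤ j → p * (t j * star (t j)) = 0 ∧ (t j * star (t j)) * p = 0) :
    (star (star v * t₁ * v) * (star v * t₁ * v) = 1 ∧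
      ∀ j, 2 ≤ j → star (star v * t₁ * t j * v) * (star v * t₁ * t j * v) = 1) ∧
    (∀ m, 2 ≤ m →
      (star v * t₁ * v) * star (star v * t₁ * v) +
        ∑ j ∈ Finset.Icc 2 m, (star v * t₁ * t j * v) * star (star v * t₁ * t j * v)
        ≤ star v * e * v) := by
  -- star of h3 : star t₁ * v = 1
  have h3' : star t₁ * v = 1 := by
    have := congrArg star h3
    simpa [star_mul] using this
  -- each t j is a partial isometry: t j * p = t j
  have htp : ∀ j, 2 ≤ j → t j * p = t j := by
    intro j hj
    have ha : star (t j * p - t j) * (t j * p - t j) = 0 := by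
      rw [star_sub, star_mul, hp₁.star_eq]
      have expand : (p * star (t j) - star (t j)) * (t j * p - t j)
          = p * (star (t j) * t j) * p - p * (star (t j) * t j)
            - (star (t j) * t j) * p + star (t j) * t j := by noncomm_ring
      rw [expand, h5 j hj]
      simp only [hp₂.eq]
      abel
    have := (CStarRing.star_mul_self_eq_zero_iff _).mp ha
    exact sub_eq_zero.mp this
  have key : ∀ j, 2 ≤ j → t j * p * star (t j) = t j * star (t j) := by
    intro j hj; rw [htp j hj]
  refine ⟨⟨?_, ?_⟩, ?_⟩
  · -- s̃₁ is an isometry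
    have : star (star v * t₁ * v) * (star v * t₁ * v)
        = star v * ((star t₁ * v) * (star v * t₁)) * v := by
      simp only [star_mul, star_star]; noncomm_ring
    rw [this, h3', h3, one_mul, mul_one, h1]
  · -- each s̃_j is an isometry
    intro j hj
    have step1 : star (star v * t₁ * t j * v) * (star v * t₁ * t j * v)
        = star v * (star (t j) * ((star t₁ * v) * (star v * t₁)) * t j) * v := by
      simp only [star_mul, star_star]; noncomm_ring
    rw [step1, h3', h3, one_mul, mul_one, h5 j hj, ← h2]
    have : star v * (v * star v) * v = (star v * v) * (star v * v) := by noncomm_ring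
    rw [this, h1, one_mul]
  · -- the sum of range projections is dominated by f̃
    intro m hm
    have t1 : (star v * t₁ * v) * star (star v * t₁ * v)
        = star v * (t₁ * p * star t₁) * v := by
      simp only [star_mul, star_star, ← h2]; noncomm_ring
    have tj : ∀ j ∈ Finset.Icc 2 m,
        (star v * t₁ * t j * v) * star (star v * t₁ * t j * v)
        = star v * (t₁ * (t j * star (t j)) * star t₁) * v := by
      intro j hj
      have hj2 : 2 ≤ j := (Finset.mem_Icc.mp hj).1
      have : (star v * t₁ * t j * v) * star (star v * t₁ * t j * v)
          = star v * (t₁ * (t j * (v * star v) * star (t j)) * star t₁) * v := by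
        simp only [star_mul, star_star]; noncomm_ring
      rw [this, h2, key j hj2]
    rw [t1, Finset.sum_congr rfl tj]
    have hsum : ∑ j ∈ Finset.Icc 2 m, star v * (t₁ * (t j * star (t j)) * star t₁) * v
        = star v * (t₁ * (∑ j ∈ Finset.Icc 2 m, t j * star (t j)) * star t₁) * v := by
      simp only [Finset.mul_sum, Finset.sum_mul]
    rw [hsum]
    have combine : star v * (t₁ * p * star t₁) * v
          + star v * (t₁ * (∑ j ∈ Finset.Icc 2 m, t j * star (t j)) * star t₁) * v
        = star v * (t₁ * (p + ∑ j ∈ Finset.Icc 2 m, t j * star (t j)) * star t₁) * v := by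
      noncomm_ring
    rw [combine]
    have step : t₁ * (p + ∑ j ∈ Finset.Icc 2 m, t j * star (t j)) * star t₁ ≤ e := by
      have := star_right_conjugate_le_conjugate (h8 m hm) t₁
      rwa [mul_one, h6] at this
    exact star_left_conjugate_le_conjugate step v
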